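/- arXiv:2002.05991 — 3 statements merged into one kernel-verified Lean document; each statement's English description precedes it below -/
import Mathlib

section
/- Fix ξ ∈ ℂⁿ and let m_ξ = (x₁−ξ₁,…,xₙ−ξₙ) be the maximal ideal at ξ. Let I be an ideal of ℂ[x₁,…,xₙ] of the form I = Q ∩ J, where Q is an m_ξ-primary ideal and J is an ideal not contained in m_ξ (so Q is the isolated m_ξ-primary component of I). Then Q^⊥ = I^⊥ ∩ ℂ[d_ξ]: a polynomial functional Λ ∈ ℂ[d_ξ] vanishes on I if and only if it vanishes on Q. -/
open MvPolynomial

/-- Total degree `|β|` of an exponent vector `β ∈ ℕⁿ`. -/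
def mdeg {n : ℕ} (a : Fin n →₀ ℕ) : ℕ := ∑ i, a i

/-- Iterated partial derivative `∂^β p`. -/
noncomputable def pdiff {n : ℕ} (β : Fin n →₀ ℕ) (p : MvPolynomial (Fin n) ℂ) :
    MvPolynomial (Fin n) ℂ :=
  (List.finRange n).foldr (fun i q => (fun r => pderiv i r)^[β i] q) p

/-- The linear functional on `ℂ[x]` attached to the dual polynomial `Λ ∈ ℂ[d_ξ]`:
`Λ(p) = Σ_β coeff_β(Λ) • (∂^β p)(ξ)`. -/
noncomputable def dapply {n : ℕ} (ξ : Fin n → ℂ) (Λ p : MvPolynomial (Fin n) ℂ) : ℂ :=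
  ∑ β ∈ Λ.support, coeff β Λ * eval ξ (pdiff β p)

/-- The shifted monomial `(x-ξ)^β`. -/
noncomputable def xpow {n : ℕ} (ξ : Fin n → ℂ) (β : Fin n →₀ ℕ) : MvPolynomial (Fin n) ℂ :=
  ∏ i, (X i - C (ξ i)) ^ β i

/-- `∫ᵏΛ`: substitute `0` for `d_{k+1},…,d_n` in `Λ` and take the antiderivative with
respect to `d_k` having no constant term. -/
noncomputable def integ {n : ℕ} (k : Fin n) (Λ : MvPolynomial (Fin n) ℂ) :
    MvPolynomial (Fin n) ℂ :=
  let Λ' := aeval (fun i => if i ≤ k then X i else 0) Λ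
  ∑ β ∈ Λ'.support, monomial (β + Finsupp.single k 1) (coeff β Λ' / ((β k : ℂ) + 1))

/-- The maximal ideal `m_ξ` of polynomials vanishing at `ξ`. -/
noncomputable def mIdeal {n : ℕ} (ξ : Fin n → ℂ) : Ideal (MvPolynomial (Fin n) ℂ) :=
  RingHom.ker (eval ξ)

/-- `β! = β₁!⋯βₙ!`. -/
def ffact {n : ℕ} (a : Fin n →₀ ℕ) : ℕ := ∏ i, (a i).factorial

lemma iter_pderiv_add {n : ℕ} (i : Fin n) (k : ℕ) (p q : MvPolynomial (Fin n) ℂ) :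
    (fun r => pderiv i r)^[k] (p + q)
      = (fun r => pderiv i r)^[k] p + (fun r => pderiv i r)^[k] q := by
  induction k generalizing p q with
  | zero => rfl
  | succ k ih =>
      simp only [Function.iterate_succ_apply]
      rw [map_add]
      exact ih _ _

lemma pdiff_add {n : ℕ} (β : Fin n →₀ ℕ) (p q : MvPolynomial (Fin n) ℂ) :
    pdiff β (p + q) = pdiff β p + pdiff β q := by
  unfold pdiff
  induction List.finRange n with
  | nil => rfl
  | cons i l ih => simp only [List.foldr_cons, ih, iter_pderiv_add]

lemma dapply_add {n : ℕ} (ξ : Fin n → ℂ) (Λ p q : MvPolynomial (Fin n) ℂ) :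
    dapply ξ Λ (p + q) = dapply ξ Λ p + dapply ξ Λ q := by
  unfold dapply
  rw [← Finset.sum_add_distrib]
  exact Finset.sum_congr rfl fun β _ => by rw [pdiff_add, map_add, mul_add]

lemma pderiv_mem_pow {n : ℕ} (ξ : Fin n → ℂ) (i : Fin n) :
    ∀ m : ℕ, ∀ f ∈ (mIdeal ξ) ^ m, pderiv i f ∈ (mIdeal ξ) ^ (m - 1) := by
  intro m
  induction m with
  | zero => intro f _; simp
  | succ m ih =>
      intro f hf
      rw [pow_succ] at hf
      simp only [Nat.succ_sub_one]
      refine Submodule.mul_induction_on hf ?_ ?_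
      · intro r hr s hs
        rw [pderiv_mul]
        refine add_mem ?_ (Ideal.mul_mem_right _ _ hr)
        cases m with
        | zero => simp
        | succ t =>
            have h1 := ih r hr
            simp only [Nat.succ_sub_one] at h1
            have h2 := Ideal.mul_mem_mul h1 hs
            rwa [← pow_succ] at h2
      · intro x y hx hy
        rw [map_add]; exact add_mem hx hy

lemma iter_pderiv_mem {n : ℕ} (ξ : Fin n → ℂ) (i : Fin n) (k : ℕ) :
    ∀ m : ℕ, ∀ f ∈ (mIdeal ξ) ^ m, (fun r => pderiv i r)^[k] f ∈ (mIdeal ξ) ^ (m - k) := by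
  induction k with
  | zero => intro m f hf; simpa using hf
  | succ k ih =>
      intro m f hf
      rw [Function.iterate_succ_apply]
      have := ih (m - 1) (pderiv i f) (pderiv_mem_pow ξ i m f hf)
      have he : m - 1 - k = m - (k + 1) := by omega
      rwa [he] at this

lemma pdiff_mem {n : ℕ} (ξ : Fin n → ℂ) (β : Fin n →₀ ℕ) (m : ℕ)
    (f : MvPolynomial (Fin n) ℂ) (hf : f ∈ (mIdeal ξ) ^ m) :
    pdiff β f ∈ (mIdeal ξ) ^ (m - mdeg β) := by
  have key : ∀ l : List (Fin n), ∀ m : ℕ, ∀ f ∈ (mIdeal ξ) ^ m,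
      l.foldr (fun i q => (fun r => pderiv i r)^[β i] q) f
        ∈ (mIdeal ξ) ^ (m - (l.map β).sum) := by
    intro l
    induction l with
    | nil => intro m f hf; simpa using hf
    | cons i l ih =>
        intro m f hf
        simp only [List.foldr_cons, List.map_cons, List.sum_cons]
        have h1 := ih m f hf
        have h2 := iter_pderiv_mem ξ i (β i) _ _ h1
        have he : m - (l.map β).sum - β i = m - (β i + (l.map β).sum) := by omega
        rwa [he] at h2
  have := key (List.finRange n) m f hf
  unfold pdiff mdeg
  rw [Fin.sum_univ_def]
  exact this

lemma eval_pdiff_zero {n : ℕ} (ξ : Fin n → ℂ) (β : Fin n →₀ ℕ) (m : ℕ)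
    (f : MvPolynomial (Fin n) ℂ) (hf : f ∈ (mIdeal ξ) ^ m) (h : mdeg β < m) :
    eval ξ (pdiff β f) = 0 := by
  have h1 := pdiff_mem ξ β m f hf
  have h2 : (mIdeal ξ) ^ (m - mdeg β) ≤ mIdeal ξ := Ideal.pow_le_self (by omega)
  exact RingHom.mem_ker.mp (h2 h1)

lemma dapply_vanish {n : ℕ} (ξ : Fin n → ℂ) (Λ f : MvPolynomial (Fin n) ℂ)
    (hf : f ∈ (mIdeal ξ) ^ (Λ.support.sup mdeg + 1)) :
    dapply ξ Λ f = 0 := by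
  unfold dapply
  refine Finset.sum_eq_zero fun β hβ => ?_
  rw [eval_pdiff_zero ξ β _ f hf (Nat.lt_succ_of_le (Finset.le_sup hβ)), mul_zero]


/-- if I = Q ∩ J with Q an m_ξ-primary ideal and J ⊄ m_ξ, then
Q^⊥ = I^⊥ ∩ ℂ[d_ξ]: a polynomial functional vanishes on I iff it vanishes on Q. -/
theorem statement2 {n : ℕ} (ξ : Fin n → ℂ) (I Q J : Ideal (MvPolynomial (Fin n) ℂ))
    (hQ : Q.IsPrimary) (hrad : Q.radical = mIdeal ξ) (hJ : ¬ J ≤ mIdeal ξ)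
    (hI : I = Q ⊓ J) :
    ∀ Λ : MvPolynomial (Fin n) ℂ,
      (∀ p ∈ I, dapply ξ Λ p = 0) ↔ (∀ p ∈ Q, dapply ξ Λ p = 0) := by
  intro Λ
  constructor
  · intro hI' p hp
    obtain ⟨g, hgJ, hgm⟩ := SetLike.not_le_iff_exists.mp hJ
    have hmax : (mIdeal ξ).IsMaximal := by
      have hsurj : Function.Surjective (eval ξ : MvPolynomial (Fin n) ℂ →+* ℂ) :=
        fun c => ⟨C c, by simp⟩
      exact RingHom.ker_isMaximal_of_surjective _ hsurj
    have h1 : mIdeal ξ ≤ (Q ⊔ Ideal.span {g}).radical := by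
      rw [← hrad]; exact Ideal.radical_mono le_sup_left
    have h2 : g ∈ (Q ⊔ Ideal.span {g}).radical :=
      Ideal.le_radical (Ideal.mem_sup_right (Ideal.mem_span_singleton_self g))
    have hrtop : (Q ⊔ Ideal.span {g}).radical = ⊤ := by
      by_contra hne
      have heq := hmax.eq_of_le hne h1
      exact hgm (heq ▸ h2)
    have htop : Q ⊔ Ideal.span {g} = ⊤ := Ideal.radical_eq_top.mp hrtop
    have h1mem : (1 : MvPolynomial (Fin n) ℂ) ∈ Q ⊔ Ideal.span {g} :=
      htop ▸ Submodule.mem_top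
    obtain ⟨q, hq, y, hy, hqy⟩ := Submodule.mem_sup.mp h1mem
    obtain ⟨h, hh⟩ := Ideal.mem_span_singleton'.mp hy
    have step : ∀ r ∈ Q, dapply ξ Λ r = dapply ξ Λ (r * q) := by
      intro r hr
      have hdecomp : r = r * q + r * (h * g) := by
        rw [← mul_add, hh, hqy, mul_one]
      have hrI : r * (h * g) ∈ I := by
        rw [hI, Submodule.mem_inf]
        constructor
        · exact Ideal.mul_mem_right _ _ hr
        · have : r * (h * g) = (r * h) * g := by ring
          rw [this]; exact Ideal.mul_mem_left _ _ hgJ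
      calc dapply ξ Λ r = dapply ξ Λ (r * q + r * (h * g)) := by rw [← hdecomp]
        _ = dapply ξ Λ (r * q) + dapply ξ Λ (r * (h * g)) := dapply_add ξ Λ _ _
        _ = dapply ξ Λ (r * q) := by rw [hI' _ hrI, add_zero]
    have iter : ∀ k : ℕ, dapply ξ Λ p = dapply ξ Λ (p * q ^ k) := by
      intro k
      induction k with
      | zero => simp
      | succ k ih =>
          rw [ih, step (p * q ^ k) (Ideal.mul_mem_right _ _ hp)]
          congr 1
          ring
    have hQle : Q ≤ mIdeal ξ := hrad ▸ Ideal.le_radical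
    set D := Λ.support.sup mdeg with hD
    have hf : p * q ^ D ∈ (mIdeal ξ) ^ (D + 1) := by
      rw [pow_succ']
      exact Ideal.mul_mem_mul (hQle hp) (Ideal.pow_mem_pow (hQle hq) D)
    rw [iter D]
    exact dapply_vanish ξ Λ _ hf
  · intro hQ' p hp
    have : p ∈ Q := by rw [hI] at hp; exact hp.1
    exact hQ' p this
end

section
/- Let Λ₁,…,Λ_s ∈ ℂ[d₁,…,dₙ] all have degree ≤ t, and suppose D = span(Λ₁,…,Λ_s) is stable under each derivation ∂_{d_k}. Then a polynomial Δ ∈ ℂ[d] with no constant term satisfies ∂_{d_k}(Δ) ∈ D for all k = 1,…,n if and only if there exist scalars ν_i^k ∈ ℂ such that Δ = Σ_{i=1}^s Σ_{k=1}^n ν_i^k ∫ᵏΛ_i and Σ_{i=1}^s ( ν_i^k ∂_{d_l}(Λ_i) − ν_i^l ∂_{d_k}(Λ_i) ) = 0 for all 1 ≤ k < l ≤ n. Moreover, in that case ∂_{d_k}(Δ) = Σ_{i=1}^s ν_i^k Λ_i for every k = 1,…,n. -/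
open MvPolynomial

namespace S5
variable {n : ℕ}

noncomputable def piK (k : Fin n) (p : MvPolynomial (Fin n) ℂ) : MvPolynomial (Fin n) ℂ :=
  aeval (fun i => if i ≤ k then X i else 0) p

lemma integ_eq_sum (k : Fin n) (Λ : MvPolynomial (Fin n) ℂ) :
    integ k Λ = (AddMonoidAlgebra.coeff (piK k Λ)).sum
      (fun β c => monomial (β + Finsupp.single k 1) (c / ((β k : ℂ) + 1))) := by
  rw [sum_def]; rfl

lemma piK_add (k : Fin n) (p q : MvPolynomial (Fin n) ℂ) :
    piK k (p + q) = piK k p + piK k q := map_add _ _ _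

lemma integ_add (k : Fin n) (p q : MvPolynomial (Fin n) ℂ) :
    integ k (p + q) = integ k p + integ k q := by
  rw [integ_eq_sum, integ_eq_sum, integ_eq_sum, piK_add]
  exact Finsupp.sum_add_index' (fun a => by simp) (fun a b₁ b₂ => by rw [add_div, map_add])

lemma integ_zero (k : Fin n) : integ k 0 = 0 := by
  rw [integ_eq_sum]
  have : piK k 0 = 0 := map_zero _
  rw [this]
  exact Finsupp.sum_zero_index

lemma piK_monomial_of (k : Fin n) (β : Fin n →₀ ℕ) (c : ℂ) (h : ∀ j, k < j → β j = 0) :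
    piK k (monomial β c) = monomial β c := by
  rw [piK, aeval_monomial, algebraMap_eq, monomial_eq]
  congr 1
  apply Finsupp.prod_congr
  intro i hi
  rw [if_pos]
  by_contra hik
  exact (Finsupp.mem_support_iff.mp hi) (h i (not_le.mp hik))

lemma piK_monomial_not (k : Fin n) (β : Fin n →₀ ℕ) (c : ℂ)
    (h : ¬ ∀ j, k < j → β j = 0) : piK k (monomial β c) = 0 := by
  push_neg at h
  obtain ⟨j, hj1, hj2⟩ := h
  rw [piK, aeval_monomial]
  have : (β.prod fun i e => (if i ≤ k then X i else 0 : MvPolynomial (Fin n) ℂ) ^ e) = 0 := by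
    apply Finset.prod_eq_zero (Finsupp.mem_support_iff.mpr hj2)
    simp only []
    rw [if_neg (not_le.mpr hj1), zero_pow hj2]
  rw [this, mul_zero]

lemma sum_monomial' {M : Type*} [AddCommMonoid M] (β : Fin n →₀ ℕ) (c : ℂ)
    (f : (Fin n →₀ ℕ) → ℂ → M) (h : f β 0 = 0) :
    (AddMonoidAlgebra.coeff (monomial β c : MvPolynomial (Fin n) ℂ)).sum f = f β c := by
  rw [← single_eq_monomial]
  exact Finsupp.sum_single_index h

lemma integ_monomial_of (k : Fin n) (β : Fin n →₀ ℕ) (c : ℂ) (h : ∀ j, k < j → β j = 0) :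
    integ k (monomial β c) = monomial (β + Finsupp.single k 1) (c / ((β k : ℂ) + 1)) := by
  rw [integ_eq_sum, piK_monomial_of k β c h, sum_monomial']
  simp

lemma integ_monomial_not (k : Fin n) (β : Fin n →₀ ℕ) (c : ℂ)
    (h : ¬ ∀ j, k < j → β j = 0) : integ k (monomial β c) = 0 := by
  rw [integ_eq_sum, piK_monomial_not k β c h]
  exact Finsupp.sum_zero_index

lemma integ_smul (k : Fin n) (c : ℂ) (p : MvPolynomial (Fin n) ℂ) :
    integ k (c • p) = c • integ k p := by
  induction p using MvPolynomial.induction_on' with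
  | monomial β b =>
    rw [smul_monomial]
    by_cases h : ∀ j, k < j → β j = 0
    · rw [integ_monomial_of k β _ h, integ_monomial_of k β b h, smul_monomial, smul_eq_mul,
        smul_eq_mul, mul_div_assoc]
    · rw [integ_monomial_not k β _ h, integ_monomial_not k β b h, smul_zero]
  | add p q ihp ihq => rw [smul_add, integ_add, integ_add, ihp, ihq, smul_add]

lemma integ_sum {α : Type*} (k : Fin n) (s : Finset α) (f : α → MvPolynomial (Fin n) ℂ) :
    integ k (∑ a ∈ s, f a) = ∑ a ∈ s, integ k (f a) := by
  classical
  induction s using Finset.induction with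
  | empty => simpa using integ_zero k
  | insert _ _ h ih => rw [Finset.sum_insert h, Finset.sum_insert h, integ_add, ih]


lemma pderiv_integ_of_gt {k l : Fin n} (h : k < l) (Λ : MvPolynomial (Fin n) ℂ) :
    pderiv l (integ k Λ) = 0 := by
  induction Λ using MvPolynomial.induction_on' with
  | monomial β c =>
    by_cases hs : ∀ j, k < j → β j = 0
    · rw [integ_monomial_of k β c hs, pderiv_monomial]
      simp [hs l h, Finsupp.single_apply, ne_of_lt h]
    · rw [integ_monomial_not k β c hs, map_zero]
  | add p q ihp ihq => rw [integ_add, map_add, ihp, ihq, add_zero]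

lemma pderiv_integ_self (k : Fin n) (Λ : MvPolynomial (Fin n) ℂ) :
    pderiv k (integ k Λ) = piK k Λ := by
  induction Λ using MvPolynomial.induction_on' with
  | monomial β c =>
    by_cases hs : ∀ j, k < j → β j = 0
    · rw [integ_monomial_of k β c hs, pderiv_monomial, piK_monomial_of k β c hs]
      have h1 : ((β + Finsupp.single k 1) : Fin n →₀ ℕ) k = β k + 1 := by
        rw [Finsupp.add_apply, Finsupp.single_apply, if_pos rfl]
      have h2 : β + Finsupp.single k 1 - Finsupp.single k 1 = β := by
        ext j; simp only [Finsupp.tsub_apply, Finsupp.add_apply]; omega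
      have h3 : ((β k : ℂ) + 1) ≠ 0 := by
        exact_mod_cast (Nat.cast_ne_zero (R := ℂ)).mpr (Nat.succ_ne_zero (β k))
      rw [h1, h2]
      congr 1
      push_cast
      field_simp
    · rw [integ_monomial_not k β c hs, map_zero, piK_monomial_not k β c hs]
  | add p q ihp ihq => rw [integ_add, map_add, ihp, ihq, piK_add]

lemma pderiv_integ_of_lt {k l : Fin n} (h : l < k) (Λ : MvPolynomial (Fin n) ℂ) :
    pderiv l (integ k Λ) = integ k (pderiv l Λ) := by
  induction Λ using MvPolynomial.induction_on' with
  | monomial β c =>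
    have hlk : l ≠ k := ne_of_lt h
    by_cases hs : ∀ j, k < j → β j = 0
    · have hs' : ∀ j, k < j → ((β - Finsupp.single l 1) : Fin n →₀ ℕ) j = 0 := by
        intro j hj
        simp [Finsupp.single_apply, ne_of_lt (h.trans hj), hs j hj]
      rw [integ_monomial_of k β c hs, pderiv_monomial, pderiv_monomial,
        integ_monomial_of k _ _ hs']
      have e1 : β + Finsupp.single k 1 - Finsupp.single l 1
          = β - Finsupp.single l 1 + Finsupp.single k 1 := by
        ext j
        simp only [Finsupp.tsub_apply, Finsupp.add_apply, Finsupp.single_apply]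
        rcases eq_or_ne k j with rfl | hj
        · rw [if_pos rfl, if_neg (by exact fun hh => hlk hh)]
          omega
        · rw [if_neg (by exact fun hh => hj hh)]
          omega
      have e2 : ((β + Finsupp.single k 1) : Fin n →₀ ℕ) l = β l := by
        rw [Finsupp.add_apply, Finsupp.single_apply, if_neg (by exact fun hh => hlk hh.symm),
          add_zero]
      have e3 : ((β - Finsupp.single l 1) : Fin n →₀ ℕ) k = β k := by
        rw [Finsupp.tsub_apply, Finsupp.single_apply, if_neg (by exact fun hh => hlk hh)]
        omega
      rw [e1, e2, e3]
      congr 1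
      ring
    · have hs' : ¬ ∀ j, k < j → ((β - Finsupp.single l 1) : Fin n →₀ ℕ) j = 0 := by
        push_neg at hs ⊢
        obtain ⟨j, hj1, hj2⟩ := hs
        refine ⟨j, hj1, ?_⟩
        rw [Finsupp.tsub_apply, Finsupp.single_apply, if_neg (by exact ne_of_lt (h.trans hj1))]
        omega
      rw [integ_monomial_not k β c hs, pderiv_monomial, integ_monomial_not k _ _ hs', map_zero]
  | add p q ihp ihq => rw [integ_add, map_add, map_add, integ_add, ihp, ihq]


lemma key_term (k : Fin n) (β : Fin n →₀ ℕ) (c : ℂ) :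
    integ k (pderiv k (monomial β c)) =
      if β k ≠ 0 ∧ ∀ j, k < j → β j = 0 then monomial β c else 0 := by
  rw [pderiv_monomial]
  by_cases h : ∀ j, k < j → β j = 0
  · by_cases hk : β k = 0
    · rw [if_neg (by tauto), hk]
      push_cast
      rw [mul_zero, (monomial _).map_zero, integ_zero]
    · rw [if_pos ⟨hk, h⟩]
      have hs' : ∀ j, k < j → ((β - Finsupp.single k 1) : Fin n →₀ ℕ) j = 0 := by
        intro j hj
        simp [Finsupp.single_apply, (ne_of_lt hj), h j hj]
      rw [integ_monomial_of k _ _ hs']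
      have hk' : 1 ≤ β k := Nat.one_le_iff_ne_zero.mpr hk
      have e1 : β - Finsupp.single k 1 + Finsupp.single k 1 = β := by
        ext a
        simp only [Finsupp.tsub_apply, Finsupp.add_apply, Finsupp.single_apply]
        split
        · next hh => subst hh; omega
        · omega
      have e2 : ((β - Finsupp.single k 1) : Fin n →₀ ℕ) k = β k - 1 := by
        rw [Finsupp.tsub_apply, Finsupp.single_apply, if_pos rfl]
      have e3 : ((β k - 1 : ℕ) : ℂ) + 1 = (β k : ℂ) := by
        have : (β k - 1) + 1 = β k := by omega
        exact_mod_cast congrArg (Nat.cast : ℕ → ℂ) this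
      have e4 : (β k : ℂ) ≠ 0 := by exact_mod_cast hk
      rw [e1, e2, e3]
      congr 1
      field_simp
  · rw [if_neg (by tauto)]
    push_neg at h
    obtain ⟨j, hj1, hj2⟩ := h
    apply integ_monomial_not
    push_neg
    refine ⟨j, hj1, ?_⟩
    simp [Finsupp.single_apply, ne_of_lt hj1, hj2]

lemma sum_term (β : Fin n →₀ ℕ) (c : ℂ) (hβ : β ≠ 0) (s : Finset (Fin n))
    (hs : ∀ k : Fin n, (β k ≠ 0 ∧ ∀ j, k < j → β j = 0) → k ∈ s) :
    ∑ k ∈ s, integ k (pderiv k (monomial β c)) = monomial β c := by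
  have hne : β.support.Nonempty := Finsupp.support_nonempty_iff.mpr hβ
  set m := β.support.max' hne with hm
  have hm1 : β m ≠ 0 := Finsupp.mem_support_iff.mp (β.support.max'_mem hne)
  have hm2 : ∀ j, m < j → β j = 0 := by
    intro j hj
    by_contra hj2
    exact absurd (β.support.le_max' j (Finsupp.mem_support_iff.mpr hj2)) (not_le.mpr hj)
  have hcond : ∀ k : Fin n, (β k ≠ 0 ∧ ∀ j, k < j → β j = 0) ↔ k = m := by
    intro k
    constructor
    · rintro ⟨hk1, hk2⟩
      have h1 : k ≤ m := β.support.le_max' k (Finsupp.mem_support_iff.mpr hk1)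
      rcases lt_or_eq_of_le h1 with h2 | h2
      · exact absurd (hk2 m h2) hm1
      · exact h2
    · rintro rfl
      exact ⟨hm1, hm2⟩
  calc ∑ k ∈ s, integ k (pderiv k (monomial β c))
      = ∑ k ∈ s, if k = m then monomial β c else 0 := by
        apply Finset.sum_congr rfl
        intro k _
        rw [key_term]
        simp only [hcond k]
    _ = monomial β c := by
        rw [Finset.sum_ite_eq' s m (fun _ => monomial β c),
          if_pos (hs m ⟨hm1, hm2⟩)]

lemma decomposition (Λ : MvPolynomial (Fin n) ℂ) (l : Fin n) :
    Λ = piK l Λ + ∑ k ∈ Finset.univ.filter (fun k => l < k), integ k (pderiv k Λ) := by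
  induction Λ using MvPolynomial.induction_on' with
  | monomial β c =>
    by_cases h : ∀ j, l < j → β j = 0
    · rw [piK_monomial_of l β c h]
      have hz : ∀ k ∈ Finset.univ.filter (fun k => l < k),
          integ k (pderiv k (monomial β c)) = 0 := by
        intro k hk
        rw [key_term, if_neg]
        rintro ⟨h1, -⟩
        exact h1 (h k (Finset.mem_filter.mp hk).2)
      rw [Finset.sum_eq_zero hz, add_zero]
    · rw [piK_monomial_not l β c h, zero_add]
      push_neg at h
      obtain ⟨j, hj1, hj2⟩ := h
      refine (sum_term β c ?_ _ ?_).symm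
      · intro h0
        rw [h0] at hj2
        exact hj2 rfl
      · rintro k ⟨hk1, hk2⟩
        simp only [Finset.mem_filter, Finset.mem_univ, true_and]
        by_contra hlk
        exact hj2 (hk2 j (lt_of_le_of_lt (not_lt.mp hlk) hj1))
  | add p q ihp ihq =>
    rw [piK_add]
    have hsum : ∑ k ∈ Finset.univ.filter (fun k => l < k), integ k (pderiv k (p + q))
        = (∑ k ∈ Finset.univ.filter (fun k => l < k), integ k (pderiv k p))
          + ∑ k ∈ Finset.univ.filter (fun k => l < k), integ k (pderiv k q) := by
      rw [← Finset.sum_add_distrib]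
      apply Finset.sum_congr rfl
      intro k _
      rw [map_add, integ_add]
    rw [hsum]
    calc p + q = (piK l p + ∑ k ∈ Finset.univ.filter (fun k => l < k), integ k (pderiv k p))
        + (piK l q + ∑ k ∈ Finset.univ.filter (fun k => l < k), integ k (pderiv k q)) := by
          rw [← ihp, ← ihq]
      _ = _ := by ring

lemma decomposition0 (Λ : MvPolynomial (Fin n) ℂ) :
    Λ = C (coeff 0 Λ) + ∑ k : Fin n, integ k (pderiv k Λ) := by
  induction Λ using MvPolynomial.induction_on' with
  | monomial β c =>
    by_cases hβ : β = 0
    · subst hβ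
      have hz : ∀ k : Fin n, integ k (pderiv k (monomial 0 c)) = 0 := by
        intro k
        rw [key_term, if_neg]
        rintro ⟨h1, -⟩
        exact h1 rfl
      rw [Finset.sum_congr rfl (fun k _ => hz k), Finset.sum_const_zero, add_zero,
        coeff_monomial, if_pos rfl, C_apply]
    · rw [sum_term β c hβ Finset.univ (fun k _ => Finset.mem_univ k),
        coeff_monomial, if_neg hβ, map_zero, zero_add]
  | add p q ihp ihq =>
    rw [coeff_add, map_add]
    have hsum : ∑ k : Fin n, integ k (pderiv k (p + q))
        = (∑ k : Fin n, integ k (pderiv k p)) + ∑ k : Fin n, integ k (pderiv k q) := by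
      rw [← Finset.sum_add_distrib]
      exact Finset.sum_congr rfl fun k _ => by rw [map_add, integ_add]
    rw [hsum]
    calc p + q = (C (coeff 0 p) + ∑ k : Fin n, integ k (pderiv k p))
        + (C (coeff 0 q) + ∑ k : Fin n, integ k (pderiv k q)) := by rw [← ihp, ← ihq]
      _ = _ := by ring

lemma pderiv_comm (i j : Fin n) (p : MvPolynomial (Fin n) ℂ) :
    pderiv i (pderiv j p) = pderiv j (pderiv i p) := by
  rcases eq_or_ne i j with rfl | hij
  · rfl
  induction p using MvPolynomial.induction_on' with
  | monomial β c =>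
    simp only [pderiv_monomial]
    have e1 : β - Finsupp.single j 1 - Finsupp.single i 1
        = β - Finsupp.single i 1 - Finsupp.single j 1 := by
      ext a
      simp only [Finsupp.tsub_apply]
      omega
    have e2 : ((β - Finsupp.single j 1) : Fin n →₀ ℕ) i = β i := by
      simp [Finsupp.single_apply, hij.symm]
    have e3 : ((β - Finsupp.single i 1) : Fin n →₀ ℕ) j = β j := by
      simp [Finsupp.single_apply, hij]
    rw [e1, e2, e3]
    congr 1
    ring
  | add p q ihp ihq => simp only [map_add, ihp, ihq]

end S5

open S5 in
/-- characterization of the elements Δ with all derivatives in a given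
derivation-stable span, via the integration operators ∫ᵏ and commutation relations. -/
theorem statement5 {n s t : ℕ} (Λ : Fin s → MvPolynomial (Fin n) ℂ)
    (hdeg : ∀ i, (Λ i).totalDegree ≤ t)
    (hstab : ∀ Λ' ∈ Submodule.span ℂ (Set.range Λ), ∀ k : Fin n,
        pderiv k Λ' ∈ Submodule.span ℂ (Set.range Λ))
    (Δ : MvPolynomial (Fin n) ℂ) (hΔ : coeff 0 Δ = 0) :
    ((∀ k : Fin n, pderiv k Δ ∈ Submodule.span ℂ (Set.range Λ)) ↔
      ∃ ν : Fin s → Fin n → ℂ,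
        Δ = ∑ i, ∑ k, ν i k • integ k (Λ i) ∧
        ∀ k l : Fin n, k < l →
          ∑ i, (ν i k • pderiv l (Λ i) - ν i l • pderiv k (Λ i)) = 0) ∧
    (∀ ν : Fin s → Fin n → ℂ,
      Δ = ∑ i, ∑ k, ν i k • integ k (Λ i) →
      (∀ k l : Fin n, k < l →
        ∑ i, (ν i k • pderiv l (Λ i) - ν i l • pderiv k (Λ i)) = 0) →
      ∀ k : Fin n, pderiv k Δ = ∑ i, ν i k • Λ i) := by
  classical
  have main2 : ∀ ν : Fin s → Fin n → ℂ,
      Δ = ∑ i, ∑ k, ν i k • integ k (Λ i) →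
      (∀ k l : Fin n, k < l →
        ∑ i, (ν i k • pderiv l (Λ i) - ν i l • pderiv k (Λ i)) = 0) →
      ∀ k : Fin n, pderiv k Δ = ∑ i, ν i k • Λ i := by
    intro ν hrep hcomm l
    have hcomm' : ∀ k, l < k →
        (∑ i, ν i k • pderiv l (Λ i)) = ∑ i, ν i l • pderiv k (Λ i) := by
      intro k hk
      have h := hcomm l k hk
      rw [Finset.sum_sub_distrib, sub_eq_zero] at h
      exact h.symm
    set T : Finset (Fin n) := Finset.univ.filter (fun k => l < k) with hT
    have hg : pderiv l Δ = ∑ k : Fin n, ∑ i : Fin s, ν i k • pderiv l (integ k (Λ i)) := by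
      rw [hrep]
      simp only [map_sum, Derivation.map_smul]
      exact Finset.sum_comm
    set g : Fin n → MvPolynomial (Fin n) ℂ :=
      fun k => ∑ i : Fin s, ν i k • pderiv l (integ k (Λ i)) with hgdef
    have hlT : l ∉ T := by simp [hT]
    have hsplit : ∑ k : Fin n, g k = g l + ∑ k ∈ T, g k := by
      rw [← Finset.sum_insert hlT]
      apply (Finset.sum_subset (Finset.subset_univ _) _).symm
      intro k _ hk
      simp only [Finset.mem_insert, hT, Finset.mem_filter, Finset.mem_univ, true_and,
        not_or, not_lt] at hk
      have hkl : k < l := lt_of_le_of_ne hk.2 hk.1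
      apply Finset.sum_eq_zero
      intro i _
      rw [pderiv_integ_of_gt hkl, smul_zero]
    have h2 : g l = ∑ i : Fin s, ν i l • piK l (Λ i) := by
      apply Finset.sum_congr rfl
      intro i _
      rw [pderiv_integ_self]
    have h3 : ∀ k ∈ T, g k = ∑ i : Fin s, ν i l • integ k (pderiv k (Λ i)) := by
      intro k hk
      have hlk : l < k := by
        simpa [hT] using hk
      calc g k = ∑ i : Fin s, ν i k • integ k (pderiv l (Λ i)) := by
            apply Finset.sum_congr rfl
            intro i _
            rw [pderiv_integ_of_lt hlk]
        _ = integ k (∑ i : Fin s, ν i k • pderiv l (Λ i)) := by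
            rw [integ_sum]
            exact Finset.sum_congr rfl fun i _ => (integ_smul _ _ _).symm
        _ = integ k (∑ i : Fin s, ν i l • pderiv k (Λ i)) := by rw [hcomm' k hlk]
        _ = ∑ i : Fin s, ν i l • integ k (pderiv k (Λ i)) := by
            rw [integ_sum]
            exact Finset.sum_congr rfl fun i _ => integ_smul _ _ _
    calc pderiv l Δ = ∑ k : Fin n, g k := hg
      _ = g l + ∑ k ∈ T, g k := hsplit
      _ = (∑ i : Fin s, ν i l • piK l (Λ i))
            + ∑ k ∈ T, ∑ i : Fin s, ν i l • integ k (pderiv k (Λ i)) := by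
          rw [h2, Finset.sum_congr rfl h3]
      _ = (∑ i : Fin s, ν i l • piK l (Λ i))
            + ∑ i : Fin s, ∑ k ∈ T, ν i l • integ k (pderiv k (Λ i)) := by
          rw [Finset.sum_comm]
      _ = ∑ i : Fin s, ν i l • (piK l (Λ i) + ∑ k ∈ T, integ k (pderiv k (Λ i))) := by
          rw [← Finset.sum_add_distrib]
          apply Finset.sum_congr rfl
          intro i _
          rw [smul_add, Finset.smul_sum]
      _ = ∑ i : Fin s, ν i l • Λ i := by
          apply Finset.sum_congr rfl
          intro i _
          rw [← decomposition (Λ i) l]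
  refine ⟨⟨fun hk => ?_, fun h k => ?_⟩, main2⟩
  · choose ν hν using fun k => (Submodule.mem_span_range_iff_exists_fun ℂ).mp (hk k)
    refine ⟨fun i k => ν k i, ?_, ?_⟩
    · have h0 := decomposition0 Δ
      rw [hΔ, map_zero, zero_add] at h0
      calc Δ = ∑ k : Fin n, integ k (pderiv k Δ) := h0
        _ = ∑ k : Fin n, ∑ i : Fin s, ν k i • integ k (Λ i) := by
            apply Finset.sum_congr rfl
            intro k _
            rw [← hν k, integ_sum]
            exact Finset.sum_congr rfl fun i _ => integ_smul _ _ _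
        _ = ∑ i : Fin s, ∑ k : Fin n, ν k i • integ k (Λ i) := Finset.sum_comm
    · intro k l hkl
      have hc := S5.pderiv_comm l k Δ
      rw [← hν k, ← hν l] at hc
      simp only [map_sum, Derivation.map_smul] at hc
      rw [Finset.sum_sub_distrib, sub_eq_zero]
      exact hc
  · obtain ⟨ν, hrep, hcomm⟩ := h
    rw [main2 ν hrep hcomm k]
    exact Submodule.sum_mem _ fun i _ =>
      Submodule.smul_mem _ _ (Submodule.subset_span ⟨i, rfl⟩)
end

section
/- Let D ∈ Hilb_μ, i.e., D is a μ-dimensional subspace of ℂ[d]_{μ−1} stable under the derivations ∂_{d_i}, and for t ≥ 0 let D_t denote the subspace of elements of D of degree ≤ t. Then for every t ≥ 0, the annihilator of D_t in ℂ[x₁,…,xₙ] satisfies (D_t)^⊥ = D^⊥ + m^{t+1}, where m = (x₁,…,xₙ). -/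
open MvPolynomial

variable {n : ℕ}


noncomputable def pdiffL (β : Fin n →₀ ℕ) :
    Module.End ℂ (MvPolynomial (Fin n) ℂ) :=
  (List.finRange n).foldr
    (fun i g => ((pderiv i : Derivation ℂ _ _).toLinearMap ^ (β i)) ∘ₗ g) LinearMap.id

lemma pdiff_eq_pdiffL (β : Fin n →₀ ℕ) (p : MvPolynomial (Fin n) ℂ) :
    pdiff β p = pdiffL β p := by
  unfold pdiff pdiffL
  induction (List.finRange n) with
  | nil => simp
  | cons i L ih => simp [ih, Module.End.pow_apply]

lemma iterate_pderiv_monomial (i : Fin n) (k : ℕ) (α : Fin n →₀ ℕ) (c : ℂ) :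
    (fun r => pderiv i r)^[k] (monomial α c)
      = monomial (α - Finsupp.single i k) (c * (α i).descFactorial k) := by
  induction k with
  | zero => simp
  | succ k ih =>
      rw [Function.iterate_succ_apply', ih, pderiv_monomial]
      have he : α - Finsupp.single i k - Finsupp.single i 1
          = α - Finsupp.single i (k+1) := by
        ext j
        by_cases hj : j = i
        · subst hj; simp [Finsupp.single_apply]; omega
        · simp [Finsupp.single_apply, Ne.symm hj]
      rw [he]
      congr 1
      · have h1 : (α - Finsupp.single i k) i = α i - k := by
          simp [Finsupp.single_apply]
        rw [h1, Nat.descFactorial_succ]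
        push_cast
        ring

lemma listsum_single_apply (β : Fin n →₀ ℕ) (L : List (Fin n)) (i : Fin n) (hi : i ∉ L) :
    ((L.map fun j => Finsupp.single j (β j)).sum) i = 0 := by
  induction L with
  | nil => simp
  | cons j L ih =>
      simp only [List.map_cons, List.sum_cons, Finsupp.add_apply]
      have hij : i ≠ j := fun h => hi (h ▸ List.mem_cons_self)
      rw [Finsupp.single_apply, if_neg (Ne.symm hij), ih (fun h => hi (List.mem_cons_of_mem j h))]

lemma foldr_pdiff_monomial (β α : Fin n →₀ ℕ) (c : ℂ) :
    ∀ (L : List (Fin n)), L.Nodup →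
    L.foldr (fun i q => (fun r => pderiv i r)^[β i] q) (monomial α c)
      = monomial (α - (L.map fun i => Finsupp.single i (β i)).sum)
          (c * (L.map fun i => ((α i).descFactorial (β i) : ℂ)).prod) := by
  intro L
  induction L with
  | nil => simp
  | cons i L ih =>
      intro hnd
      rw [List.nodup_cons] at hnd
      simp only [List.foldr_cons]
      rw [ih hnd.2, iterate_pderiv_monomial]
      have hS : (α - (L.map fun j => Finsupp.single j (β j)).sum) i = α i := by
        rw [Finsupp.tsub_apply, listsum_single_apply β L i hnd.1, Nat.sub_zero]
      rw [hS]
      congr 1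
      · rw [tsub_tsub]
        congr 1
        simp [add_comm]
      · simp only [List.map_cons, List.prod_cons]
        ring

lemma pdiff_monomial (β α : Fin n →₀ ℕ) (c : ℂ) :
    pdiff β (monomial α c)
      = monomial (α - β) (c * ∏ i, ((α i).descFactorial (β i) : ℂ)) := by
  rw [pdiff, foldr_pdiff_monomial β α c _ (List.nodup_finRange n)]
  have h1 : ((List.finRange n).map fun i => Finsupp.single i (β i)).sum = β := by
    rw [← Fin.sum_univ_def]
    ext j
    rw [Finsupp.finset_sum_apply]
    simp [Finsupp.single_apply]
  have h2 : ((List.finRange n).map fun i => ((α i).descFactorial (β i) : ℂ)).prod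
      = ∏ i, ((α i).descFactorial (β i) : ℂ) := (Fin.prod_univ_def _).symm
  rw [h1, h2]

lemma eval0_monomial (γ : Fin n →₀ ℕ) (a : ℂ) :
    eval (0 : Fin n → ℂ) (monomial γ a) = if γ = 0 then a else 0 := by
  rw [eval_monomial]
  by_cases h : γ = 0
  · simp [h]
  · rw [if_neg h]
    obtain ⟨i, hi⟩ : ∃ i, γ i ≠ 0 := by
      by_contra hc
      push_neg at hc
      exact h (Finsupp.ext hc)
    have : γ.prod (fun i e => (0 : Fin n → ℂ) i ^ e) = 0 := by
      apply Finset.prod_eq_zero (Finsupp.mem_support_iff.2 hi)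
      simp [zero_pow hi]
    rw [this, mul_zero]

lemma ffact_cast (β : Fin n →₀ ℕ) : (ffact β : ℂ) = ∏ i, ((β i).factorial : ℂ) := by
  rw [ffact]; push_cast; rfl

lemma eval0_pdiff_monomial (β α : Fin n →₀ ℕ) (c : ℂ) :
    eval (0 : Fin n → ℂ) (pdiff β (monomial α c))
      = (ffact β : ℂ) * coeff β (monomial α c) := by
  rw [pdiff_monomial, eval0_monomial, coeff_monomial]
  by_cases h : α = β
  · subst h
    rw [if_pos, if_pos rfl, ffact_cast]
    · rw [Finset.prod_congr rfl (fun i _ => by rw [Nat.descFactorial_self])]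
      ring
    · simp
  · rw [if_neg h]
    by_cases h2 : α - β = 0
    · rw [if_pos h2]
      obtain ⟨i, hi⟩ : ∃ i, α i < β i := by
        by_contra hc
        push_neg at hc
        apply h
        ext j
        have := Finsupp.ext_iff.1 h2 j
        rw [Finsupp.tsub_apply, Finsupp.coe_zero, Pi.zero_apply] at this
        have h3 := hc j
        omega
      have : (∏ i, ((α i).descFactorial (β i) : ℂ)) = 0 := by
        apply Finset.prod_eq_zero (Finset.mem_univ i)
        rw [Nat.descFactorial_eq_zero_iff_lt.2 hi, Nat.cast_zero]
      rw [this, mul_zero, mul_zero]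
    · rw [if_neg h2, mul_zero]

lemma eval0_pdiff (β : Fin n →₀ ℕ) (p : MvPolynomial (Fin n) ℂ) :
    eval (0 : Fin n → ℂ) (pdiff β p) = (ffact β : ℂ) * coeff β p := by
  conv_lhs => rw [p.as_sum]
  conv_rhs => rw [p.as_sum]
  rw [pdiff_eq_pdiffL, map_sum, map_sum, coeff_sum, Finset.mul_sum]
  refine Finset.sum_congr rfl (fun α _ => ?_)
  rw [← pdiff_eq_pdiffL, eval0_pdiff_monomial]


lemma dapply_eq (Λ p : MvPolynomial (Fin n) ℂ) :
    dapply (0 : Fin n → ℂ) Λ p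
      = ∑ β ∈ Λ.support, coeff β Λ * (ffact β : ℂ) * coeff β p := by
  rw [dapply]
  refine Finset.sum_congr rfl (fun β _ => ?_)
  rw [eval0_pdiff]; ring

lemma dapply_eq_sum_of_subset {Λ p : MvPolynomial (Fin n) ℂ} {F : Finset (Fin n →₀ ℕ)}
    (h : Λ.support ⊆ F) :
    dapply (0 : Fin n → ℂ) Λ p
      = ∑ β ∈ F, coeff β Λ * (ffact β : ℂ) * coeff β p := by
  rw [dapply_eq]
  apply Finset.sum_subset h
  intro β _ hβ
  rw [notMem_support_iff.1 hβ]; ring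

lemma dapply_symm (Λ p : MvPolynomial (Fin n) ℂ) :
    dapply (0 : Fin n → ℂ) Λ p = dapply (0 : Fin n → ℂ) p Λ := by
  rw [dapply_eq_sum_of_subset (F := Λ.support ∪ p.support) Finset.subset_union_left,
    dapply_eq_sum_of_subset (F := Λ.support ∪ p.support) Finset.subset_union_right]
  exact Finset.sum_congr rfl (fun β _ => by ring)

lemma dapply_add_right (Λ p q : MvPolynomial (Fin n) ℂ) :
    dapply (0 : Fin n → ℂ) Λ (p + q)
      = dapply (0 : Fin n → ℂ) Λ p + dapply (0 : Fin n → ℂ) Λ q := by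
  simp only [dapply_eq, coeff_add, ← Finset.sum_add_distrib]
  exact Finset.sum_congr rfl (fun β _ => by ring)

lemma dapply_smul_right (Λ p : MvPolynomial (Fin n) ℂ) (c : ℂ) :
    dapply (0 : Fin n → ℂ) Λ (c • p) = c * dapply (0 : Fin n → ℂ) Λ p := by
  simp only [dapply_eq, coeff_smul, Finset.mul_sum, smul_eq_mul]
  exact Finset.sum_congr rfl (fun β _ => by ring)

lemma dapply_add_left (Λ Λ' p : MvPolynomial (Fin n) ℂ) :
    dapply (0 : Fin n → ℂ) (Λ + Λ') p
      = dapply (0 : Fin n → ℂ) Λ p + dapply (0 : Fin n → ℂ) Λ' p := by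
  rw [dapply_symm, dapply_add_right, dapply_symm p Λ, dapply_symm p Λ']

lemma dapply_smul_left (Λ p : MvPolynomial (Fin n) ℂ) (c : ℂ) :
    dapply (0 : Fin n → ℂ) (c • Λ) p = c * dapply (0 : Fin n → ℂ) Λ p := by
  rw [dapply_symm, dapply_smul_right, dapply_symm p Λ]

lemma mdeg_eq_sum (β : Fin n →₀ ℕ) : mdeg β = β.sum (fun _ e => e) := by
  rw [mdeg, Finsupp.sum_fintype]
  intro i; rfl

lemma mdeg_le_totalDegree {β : Fin n →₀ ℕ} {p : MvPolynomial (Fin n) ℂ}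
    (h : β ∈ p.support) : mdeg β ≤ p.totalDegree := by
  rw [mdeg_eq_sum]
  exact MvPolynomial.le_totalDegree h


noncomputable def trunc (t : ℕ) (p : MvPolynomial (Fin n) ℂ) : MvPolynomial (Fin n) ℂ :=
  ∑ β ∈ p.support.filter (fun β => mdeg β ≤ t), monomial β (coeff β p)

lemma coeff_trunc (t : ℕ) (γ : Fin n →₀ ℕ) (p : MvPolynomial (Fin n) ℂ) :
    coeff γ (trunc t p) = if mdeg γ ≤ t then coeff γ p else 0 := by
  rw [trunc, coeff_sum]
  simp only [coeff_monomial]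
  rw [Finset.sum_ite_eq' (p.support.filter fun β => mdeg β ≤ t) γ (fun β => coeff β p)]
  by_cases h : mdeg γ ≤ t
  · rw [if_pos h]
    by_cases hs : γ ∈ p.support
    · rw [if_pos (Finset.mem_filter.2 ⟨hs, h⟩)]
    · rw [if_neg (fun hc => hs (Finset.mem_filter.1 hc).1), (notMem_support_iff.1 hs)]
  · rw [if_neg h]
    rw [if_neg (fun hc : γ ∈ p.support.filter (fun β => mdeg β ≤ t) =>
      h (Finset.mem_filter.1 hc).2)]

lemma totalDegree_trunc_le (t : ℕ) (p : MvPolynomial (Fin n) ℂ) :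
    (trunc t p).totalDegree ≤ t := by
  rw [totalDegree]
  apply Finset.sup_le
  intro β hβ
  rw [← mdeg_eq_sum]
  by_contra hc
  rw [mem_support_iff, coeff_trunc, if_neg hc] at hβ
  exact hβ rfl

lemma trunc_mem_rtd (t : ℕ) (p : MvPolynomial (Fin n) ℂ) :
    trunc t p ∈ restrictTotalDegree (Fin n) ℂ t :=
  (mem_restrictTotalDegree _ _ _).2 (totalDegree_trunc_le t p)

lemma dapply_trunc_right {Λ : MvPolynomial (Fin n) ℂ} (t : ℕ) (h : Λ.totalDegree ≤ t)
    (p : MvPolynomial (Fin n) ℂ) :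
    dapply (0 : Fin n → ℂ) Λ (trunc t p) = dapply (0 : Fin n → ℂ) Λ p := by
  rw [dapply_eq, dapply_eq]
  refine Finset.sum_congr rfl (fun β hβ => ?_)
  rw [coeff_trunc, if_pos ((mdeg_le_totalDegree hβ).trans h)]

noncomputable def truncL (t : ℕ) : MvPolynomial (Fin n) ℂ →ₗ[ℂ] MvPolynomial (Fin n) ℂ where
  toFun := trunc t
  map_add' p q := by
    apply MvPolynomial.ext
    intro γ
    simp only [coeff_trunc, coeff_add]
    split_ifs <;> simp
  map_smul' c p := by
    apply MvPolynomial.ext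
    intro γ
    simp only [coeff_trunc, coeff_smul, RingHom.id_apply]
    split_ifs <;> simp

lemma mdeg_add (γ δ : Fin n →₀ ℕ) : mdeg (γ + δ) = mdeg γ + mdeg δ := by
  simp [mdeg, Finset.sum_add_distrib]

lemma coeff_eq_zero_of_mem_mIdeal_pow :
    ∀ (s : ℕ) (r : MvPolynomial (Fin n) ℂ), r ∈ mIdeal (0 : Fin n → ℂ) ^ s →
      ∀ β : Fin n →₀ ℕ, mdeg β < s → coeff β r = 0 := by
  intro s
  induction s with
  | zero => intro r _ β hβ; omega
  | succ s ih =>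
      intro r hr
      rw [pow_succ] at hr
      refine Submodule.mul_induction_on hr ?_ ?_
      · intro a ha b hb β hβ
        rw [coeff_mul]
        apply Finset.sum_eq_zero
        rintro ⟨γ, δ⟩ hgd
        rw [Finset.HasAntidiagonal.mem_antidiagonal] at hgd
        have hadd : mdeg γ + mdeg δ = mdeg β := by rw [← hgd, mdeg_add]
        by_cases hγ : mdeg γ < s
        · rw [ih a ha γ hγ, zero_mul]
        · have hδ0 : mdeg δ = 0 := by omega
          have hδ : δ = 0 := by
            ext i
            exact (Finset.sum_eq_zero_iff.1 hδ0) i (Finset.mem_univ i)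
          subst hδ
          have hb0 : coeff 0 b = 0 := by
            have h : eval (0 : Fin n → ℂ) b = 0 := RingHom.mem_ker.1 hb
            rw [eval_zero, constantCoeff_eq] at h
            exact h
          rw [hb0, mul_zero]
      · intro x y hx hy β hβ
        rw [coeff_add, hx β hβ, hy β hβ, add_zero]

lemma X_mem_mIdeal (i : Fin n) : (X i : MvPolynomial (Fin n) ℂ) ∈ mIdeal (0 : Fin n → ℂ) :=
  RingHom.mem_ker.2 (by simp)

lemma prod_pow_mem_mIdeal_pow (β : Fin n →₀ ℕ) (F : Finset (Fin n)) :
    (∏ i ∈ F, (X i : MvPolynomial (Fin n) ℂ) ^ β i)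
      ∈ mIdeal (0 : Fin n → ℂ) ^ (∑ i ∈ F, β i) := by
  classical
  refine Finset.induction_on F ?_ ?_
  · simp [Ideal.one_eq_top]
  · intro a F' ha ih
    rw [Finset.prod_insert ha, Finset.sum_insert ha, pow_add]
    exact Ideal.mul_mem_mul (Ideal.pow_mem_pow (X_mem_mIdeal a) _) ih

lemma monomial_mem_mIdeal_pow {β : Fin n →₀ ℕ} {s : ℕ} (h : s ≤ mdeg β) (c : ℂ) :
    monomial β c ∈ mIdeal (0 : Fin n → ℂ) ^ s := by
  have h1 : monomial β c = C c * ∏ i ∈ β.support, (X i : MvPolynomial (Fin n) ℂ) ^ β i := by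
    rw [monomial_eq]; rfl
  have h2 : (∑ i ∈ β.support, β i) = mdeg β := by
    rw [mdeg_eq_sum]; rfl
  have h3 : (∏ i ∈ β.support, (X i : MvPolynomial (Fin n) ℂ) ^ β i)
      ∈ mIdeal (0 : Fin n → ℂ) ^ mdeg β := by
    rw [← h2]; exact prod_pow_mem_mIdeal_pow β β.support
  rw [h1]
  exact Ideal.pow_le_pow_right h (Ideal.mul_mem_left _ _ h3)

lemma mem_mIdeal_pow_of_coeff {r : MvPolynomial (Fin n) ℂ} {t : ℕ}
    (h : ∀ β : Fin n →₀ ℕ, mdeg β ≤ t → coeff β r = 0) :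
    r ∈ mIdeal (0 : Fin n → ℂ) ^ (t + 1) := by
  rw [r.as_sum]
  apply Ideal.sum_mem
  intro β hβ
  apply monomial_mem_mIdeal_pow _ (coeff β r)
  by_contra hc
  push_neg at hc
  exact (mem_support_iff.1 hβ) (h β (by omega))

lemma ffact_ne_zero (β : Fin n →₀ ℕ) : (ffact β : ℂ) ≠ 0 := by
  have : 0 < ffact β := Finset.prod_pos (fun i _ => Nat.factorial_pos _)
  exact Nat.cast_ne_zero.2 this.ne'

noncomputable def Bs (s : ℕ) :
    LinearMap.BilinForm ℂ ↥(restrictTotalDegree (Fin n) ℂ s) :=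
  LinearMap.mk₂ ℂ (fun u v => dapply (0 : Fin n → ℂ) ↑u ↑v)
    (fun u u' v => by simp [dapply_add_left])
    (fun c u v => by simp [dapply_smul_left])
    (fun u v v' => by simp [dapply_add_right])
    (fun c u v => by simp [dapply_smul_right])

lemma Bs_apply (s : ℕ) (u v : ↥(restrictTotalDegree (Fin n) ℂ s)) :
    Bs s u v = dapply (0 : Fin n → ℂ) ↑u ↑v := rfl

lemma Bs_isRefl (s : ℕ) : (Bs (n := n) s).IsRefl := by
  intro u v h
  rw [Bs_apply, dapply_symm] at h
  exact h

lemma monomial_mem_rtd {s : ℕ} {β : Fin n →₀ ℕ} (h : mdeg β ≤ s) (c : ℂ) :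
    monomial β c ∈ restrictTotalDegree (Fin n) ℂ s := by
  rw [mem_restrictTotalDegree]
  refine le_trans (totalDegree_monomial_le β c) ?_
  have he : (β.sum fun _ => id) = mdeg β := by rw [mdeg_eq_sum]; rfl
  rw [he]
  exact h

lemma Bs_nondegenerate (s : ℕ) : (Bs (n := n) s).Nondegenerate := by
  refine (LinearMap.IsRefl.nondegenerate_iff_separatingLeft (Bs_isRefl s)).2 ?_
  intro u hu
  have hcoeff : ∀ β : Fin n →₀ ℕ, coeff β (↑u : MvPolynomial (Fin n) ℂ) = 0 := by
    intro β
    by_cases hβ : β ∈ (↑u : MvPolynomial (Fin n) ℂ).support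
    · have hβs : mdeg β ≤ s :=
        le_trans (mdeg_le_totalDegree hβ) ((mem_restrictTotalDegree _ _ _).1 u.2)
      have h0 := hu ⟨monomial β 1, monomial_mem_rtd hβs 1⟩
      rw [Bs_apply, dapply_eq] at h0
      have h1 : ∑ γ ∈ (↑u : MvPolynomial (Fin n) ℂ).support,
          (if β = γ then coeff γ (↑u : MvPolynomial (Fin n) ℂ) * (ffact γ : ℂ) else 0) = 0 := by
        refine (Finset.sum_congr rfl (fun γ _ => ?_)).trans h0
        rw [coeff_monomial]
        split_ifs <;> ring
      rw [Finset.sum_ite_eq, if_pos hβ] at h1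
      exact (mul_eq_zero.1 h1).resolve_right (ffact_ne_zero β)
    · exact notMem_support_iff.1 hβ
  have : (↑u : MvPolynomial (Fin n) ℂ) = 0 := MvPolynomial.ext _ _ (by simpa using hcoeff)
  exact Subtype.ext this

lemma crux {s : ℕ} {D : Submodule ℂ (MvPolynomial (Fin n) ℂ)}
    (hDs : D ≤ restrictTotalDegree (Fin n) ℂ s)
    {Λ : MvPolynomial (Fin n) ℂ} (hΛs : Λ ∈ restrictTotalDegree (Fin n) ℂ s)
    (hΛ : Λ ∉ D) :
    ∃ p, (∀ Λ' ∈ D, dapply (0 : Fin n → ℂ) Λ' p = 0) ∧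
      dapply (0 : Fin n → ℂ) Λ p ≠ 0 := by
  set V := restrictTotalDegree (Fin n) ℂ s with hV
  set D' : Submodule ℂ ↥V := D.comap V.subtype with hD'
  have hΛ' : (⟨Λ, hΛs⟩ : ↥V) ∉ D' := fun h => hΛ h
  have horth := LinearMap.BilinForm.orthogonal_orthogonal
    (Bs_nondegenerate (n := n) s) (Bs_isRefl s) D'
  have hmem : (⟨Λ, hΛs⟩ : ↥V) ∉ (Bs s).orthogonal ((Bs s).orthogonal D') := by
    rw [horth]; exact hΛ'
  obtain ⟨v, hv, hvΛ⟩ : ∃ v ∈ (Bs s).orthogonal D', ¬ (Bs s) v ⟨Λ, hΛs⟩ = 0 := by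
    by_contra hc
    push_neg at hc
    exact hmem (fun v hv => hc v hv)
  refine ⟨↑v, ?_, ?_⟩
  · intro Λ' hΛ'mem
    exact hv ⟨Λ', hDs hΛ'mem⟩ hΛ'mem
  · intro hc
    apply hvΛ
    rw [Bs_apply, dapply_symm]
    exact hc

lemma mem_of_forall_ann {m : ℕ} {D : Submodule ℂ (MvPolynomial (Fin n) ℂ)}
    (hD : D ≤ restrictTotalDegree (Fin n) ℂ m) {Λ : MvPolynomial (Fin n) ℂ}
    (h : ∀ p, (∀ Λ' ∈ D, dapply (0 : Fin n → ℂ) Λ' p = 0) →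
      dapply (0 : Fin n → ℂ) Λ p = 0) :
    Λ ∈ D := by
  by_contra hΛ
  set s := max m Λ.totalDegree with hs
  have hDs : D ≤ restrictTotalDegree (Fin n) ℂ s := fun q hq =>
    (mem_restrictTotalDegree _ _ _).2
      (le_trans ((mem_restrictTotalDegree _ _ _).1 (hD hq)) (le_max_left _ _))
  have hΛs : Λ ∈ restrictTotalDegree (Fin n) ℂ s :=
    (mem_restrictTotalDegree _ _ _).2 (le_max_right _ _)
  obtain ⟨p, h1, h2⟩ := crux hDs hΛs hΛ
  exact h2 (h p h1)


/-- for D ∈ Hilb_μ and D_t the elements of D of degree ≤ t,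
(D_t)^⊥ = D^⊥ + m^{t+1} (with ξ = 0). -/
theorem statement12 {n μ : ℕ} (D : Submodule ℂ (MvPolynomial (Fin n) ℂ))
    (hD : D ≤ restrictTotalDegree (Fin n) ℂ (μ - 1))
    (hdim : Module.finrank ℂ D = μ)
    (hstab : ∀ Λ ∈ D, ∀ i : Fin n, pderiv i Λ ∈ D)
    (Q : Ideal (MvPolynomial (Fin n) ℂ))
    (hQ : (↑Q : Set (MvPolynomial (Fin n) ℂ)) =
      {p | ∀ Λ ∈ D, dapply (0 : Fin n → ℂ) Λ p = 0}) :
    ∀ t : ℕ,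
      {p : MvPolynomial (Fin n) ℂ |
          ∀ Λ ∈ D ⊓ restrictTotalDegree (Fin n) ℂ t, dapply (0 : Fin n → ℂ) Λ p = 0} =
        ↑(Q + mIdeal (0 : Fin n → ℂ) ^ (t + 1)) := by
  intro t
  have hQmem : ∀ q, q ∈ Q ↔ (∀ Λ ∈ D, dapply (0 : Fin n → ℂ) Λ q = 0) := by
    intro q
    constructor
    · intro hq
      have : q ∈ (↑Q : Set (MvPolynomial (Fin n) ℂ)) := hq
      rw [hQ] at this
      exact this
    · intro hq
      show q ∈ (↑Q : Set (MvPolynomial (Fin n) ℂ))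
      rw [hQ]
      exact hq
  ext p
  simp only [Set.mem_setOf_eq, SetLike.mem_coe]
  constructor
  · -- hard direction
    intro hp
    set V := restrictTotalDegree (Fin n) ℂ t with hV
    set D' : Submodule ℂ ↥V := (D ⊓ V).comap V.subtype with hD'
    set QS : Submodule ℂ (MvPolynomial (Fin n) ℂ) := Q.restrictScalars ℂ with hQS
    set E : Submodule ℂ ↥V := (QS.map (truncL (n := n) t)).comap V.subtype with hE
    have hdegV : ∀ u : ↥V, (↑u : MvPolynomial (Fin n) ℂ).totalDegree ≤ t := by
      intro u
      exact (mem_restrictTotalDegree _ _ _).1 u.2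
    -- Claim A : orthogonal of E is contained in D'
    have hA : (Bs t).orthogonal E ≤ D' := by
      intro u hu
      have hUD : (↑u : MvPolynomial (Fin n) ℂ) ∈ D := by
        apply mem_of_forall_ann hD
        intro q hq
        rw [← dapply_trunc_right t (hdegV u) q, dapply_symm]
        have hqE : (⟨trunc t q, trunc_mem_rtd t q⟩ : ↥V) ∈ E := by
          rw [hE]
          refine Submodule.mem_comap.2 ?_
          exact ⟨q, (hQmem q).2 hq, rfl⟩
        exact hu _ hqE
      exact Submodule.mem_comap.2 ⟨hUD, u.2⟩
    -- Claim B : truncation of p lies in orthogonal of D'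
    have hp1 : (⟨trunc t p, trunc_mem_rtd t p⟩ : ↥V) ∈ (Bs t).orthogonal D' := by
      intro u hu
      show (Bs t) u _ = 0
      rw [Bs_apply]
      show dapply (0 : Fin n → ℂ) (↑u) (trunc t p) = 0
      rw [dapply_trunc_right t (hdegV u) p]
      exact hp ↑u (Submodule.mem_comap.1 hu)
    have hEE : (⟨trunc t p, trunc_mem_rtd t p⟩ : ↥V) ∈ E := by
      have h1 : (Bs t).orthogonal D' ≤ (Bs t).orthogonal ((Bs t).orthogonal E) :=
        LinearMap.BilinForm.orthogonal_le hA
      have h2 := LinearMap.BilinForm.orthogonal_orthogonal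
        (Bs_nondegenerate (n := n) t) (Bs_isRefl t) E
      rw [h2] at h1
      exact h1 hp1
    obtain ⟨q, hqQ, hqtr⟩ : ∃ q ∈ QS, truncL (n := n) t q = trunc t p :=
      Submodule.mem_comap.1 hEE
    have hqQ' : q ∈ Q := hqQ
    have hr : p - q ∈ mIdeal (0 : Fin n → ℂ) ^ (t + 1) := by
      apply mem_mIdeal_pow_of_coeff
      intro β hβ
      have h1 : coeff β (trunc t q) = coeff β (trunc t p) := by
        rw [show trunc t q = truncL (n := n) t q from rfl, hqtr]
      rw [coeff_trunc, coeff_trunc, if_pos hβ, if_pos hβ] at h1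
      rw [coeff_sub, h1, sub_self]
    have : p = q + (p - q) := by ring
    rw [this, Submodule.add_eq_sup]
    exact Submodule.add_mem _ (Submodule.mem_sup_left hqQ')
      (Submodule.mem_sup_right hr)
  · -- easy direction
    intro hp Λ hΛ
    rw [Submodule.add_eq_sup] at hp
    obtain ⟨q, hq, r, hr, rfl⟩ := Submodule.mem_sup.1 hp
    rw [dapply_add_right, (hQmem q).1 hq Λ hΛ.1, zero_add, dapply_eq]
    apply Finset.sum_eq_zero
    intro β hβ
    have hβt : mdeg β ≤ t :=
      le_trans (mdeg_le_totalDegree hβ) ((mem_restrictTotalDegree _ _ _).1 hΛ.2)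
    rw [coeff_eq_zero_of_mem_mIdeal_pow (t + 1) r hr β (by omega), mul_zero]
end
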